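/- Let d ≥ 2 and let ρ be a density matrix on ℂ^d ⊗ ℂ^d that does not belong to 𝔄𝔉_d. Then there exists a Hermitian d²×d² matrix S such that Tr(Sσ) ≥ 0 for every σ ∈ 𝔄𝔉_d, while Tr(Sρ) < 0. -/

import Mathlib

open Matrix Kronecker Complex
open scoped ComplexOrder

/-- The canonical maximally entangled vector `|ψ⁺⟩ = (1/√d) ∑ᵢ |ii⟩` on `ℂ^d ⊗ ℂ^d`. -/
noncomputable def psiPlus (d : ℕ) : (Fin d × Fin d) → ℂ :=
  fun p => if p.1 = p.2 then ((Real.sqrt d)⁻¹ : ℝ) else 0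

/-- The fully entangled fraction: the supremum over `d × d` unitaries `V` of
`⟨ψ⁺| (I ⊗ V)† ρ (I ⊗ V) |ψ⁺⟩`. -/
noncomputable def fef (d : ℕ) (ρ : Matrix (Fin d × Fin d) (Fin d × Fin d) ℂ) : ℝ :=
  ⨆ V : Matrix.unitaryGroup (Fin d) ℂ,
    (star (psiPlus d) ⬝ᵥ
      ((((1 : Matrix (Fin d) (Fin d) ℂ) ⊗ₖ (V : Matrix (Fin d) (Fin d) ℂ))ᴴ * ρ *
        ((1 : Matrix (Fin d) (Fin d) ℂ) ⊗ₖ (V : Matrix (Fin d) (Fin d) ℂ))) *ᵥ psiPlus d)).re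

/-- A density matrix: positive semidefinite with unit trace. -/
def IsDensityMatrix {n : Type*} [Fintype n] (ρ : Matrix n n ℂ) : Prop :=
  ρ.PosSemidef ∧ ρ.trace = 1

/-- `ρ` has absolute fully entangled fraction: `F(UρU†) ≤ 1/d` for every unitary `U`. -/
def AbsFEF (d : ℕ) (ρ : Matrix (Fin d × Fin d) (Fin d × Fin d) ℂ) : Prop :=
  ∀ U ∈ Matrix.unitaryGroup (Fin d × Fin d) ℂ, fef d (U * ρ * Uᴴ) ≤ 1 / d

/-- Basis vector `|ij⟩` of `ℂ^d ⊗ ℂ^d`. -/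
def ket (d : ℕ) (i j : Fin d) : (Fin d × Fin d) → ℂ :=
  fun p => if p = (i, j) then 1 else 0

/-- Rank-one projector `|v⟩⟨v|`. -/
def proj {n : Type*} (v : n → ℂ) : Matrix n n ℂ :=
  Matrix.vecMulVec v (star v)

/-- Witness operators: if a density matrix `ρ` is not in `𝔄𝔉_d`, there is a Hermitian
operator `S` with nonnegative expectation on every member of `𝔄𝔉_d` but `Tr(Sρ) < 0`. -/

lemma kron_conjTranspose {m n : Type*} [Fintype m] [Fintype n]
    (A : Matrix m m ℂ) (B : Matrix n n ℂ) : (A ⊗ₖ B)ᴴ = Aᴴ ⊗ₖ Bᴴ := by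
  ext ⟨i, j⟩ ⟨k, l⟩
  simp [conjTranspose_apply, kroneckerMap_apply]

lemma kron_unitary {m n : Type*} [Fintype m] [Fintype n] [DecidableEq m] [DecidableEq n]
    (V : Matrix n n ℂ) (hV : V ∈ Matrix.unitaryGroup n ℂ) :
    ((1 : Matrix m m ℂ) ⊗ₖ V) ∈ Matrix.unitaryGroup (m × n) ℂ := by
  rw [Matrix.mem_unitaryGroup_iff'] at hV ⊢
  show ((1 : Matrix m m ℂ) ⊗ₖ V)ᴴ * ((1 : Matrix m m ℂ) ⊗ₖ V) = 1
  rw [kron_conjTranspose, conjTranspose_one, ← mul_kronecker_mul, one_mul,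
    show (Vᴴ : Matrix n n ℂ) * V = 1 from hV, one_kronecker_one]

lemma psi_norm (d : ℕ) (hd : 0 < d) : star (psiPlus d) ⬝ᵥ psiPlus d = 1 := by
  simp only [dotProduct, Pi.star_apply, psiPlus]
  rw [Fintype.sum_prod_type]
  have : ∀ i : Fin d, ∑ j : Fin d,
      star (if (i, j).1 = (i, j).2 then (((Real.sqrt d)⁻¹ : ℝ) : ℂ) else 0) *
      (if (i, j).1 = (i, j).2 then (((Real.sqrt d)⁻¹ : ℝ) : ℂ) else 0) = (d : ℂ)⁻¹ := by
    intro i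
    have hval : (star ((((Real.sqrt d))⁻¹:ℝ):ℂ)) * ((((Real.sqrt d))⁻¹:ℝ):ℂ) = (d:ℂ)⁻¹ := by
      rw [RCLike.star_def, Complex.conj_ofReal, ← Complex.ofReal_mul, ← Real.sqrt_inv,
        Real.mul_self_sqrt (by positivity)]
      push_cast
      rfl
    rw [Finset.sum_eq_single i]
    · simpa using hval
    · intro b _ hb
      simp [Ne.symm hb]
    · simp
  simp only [this, Finset.sum_const, Finset.card_univ, Fintype.card_fin, nsmul_eq_mul]
  rw [mul_inv_cancel₀]
  exact_mod_cast hd.ne'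

lemma unitary_mulVec_dot {n : Type*} [Fintype n] [DecidableEq n]
    (M : Matrix n n ℂ) (hM : M ∈ Matrix.unitaryGroup n ℂ) (y : n → ℂ) :
    star (M *ᵥ y) ⬝ᵥ (M *ᵥ y) = star y ⬝ᵥ y := by
  rw [Matrix.star_mulVec, Matrix.dotProduct_mulVec, Matrix.vecMul_vecMul,
    show Mᴴ * M = (1 : Matrix n n ℂ) from Matrix.mem_unitaryGroup_iff'.mp hM,
    Matrix.vecMul_one]

lemma row_bound {n : Type*} [Fintype n] (a y : n → ℂ) :
    Complex.normSq (∑ j, a j * y j) ≤ (∑ j, Complex.normSq (a j)) * (∑ j, Complex.normSq (y j)) := by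
  have h1 : ‖∑ j, a j * y j‖ ≤ ∑ j, ‖a j‖ * ‖y j‖ := by
    refine (norm_sum_le _ _).trans ?_
    simp [_root_.map_mul]
  have h2 : (∑ j, ‖a j‖ * ‖y j‖)^2 ≤
      (∑ j, ‖a j‖^2) * (∑ j, ‖y j‖^2) :=
    Finset.sum_mul_sq_le_sq_mul_sq _ _ _
  calc Complex.normSq (∑ j, a j * y j) = (‖∑ j, a j * y j‖)^2 := (Complex.sq_norm _).symm
    _ ≤ (∑ j, ‖a j‖ * ‖y j‖)^2 := by
        apply pow_le_pow_left₀ (norm_nonneg _) h1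
    _ ≤ (∑ j, ‖a j‖^2) * (∑ j, ‖y j‖^2) := h2
    _ = _ := by simp [Complex.sq_norm]

lemma quad_le_trace {n : Type*} [Fintype n] [DecidableEq n]
    {τ : Matrix n n ℂ} (hτ : τ.PosSemidef) (y : n → ℂ) (hy : star y ⬝ᵥ y = 1) :
    (star y ⬝ᵥ (τ *ᵥ y)).re ≤ τ.trace.re := by
  obtain ⟨B, rfl⟩ : ∃ B : Matrix n n ℂ, τ = Bᴴ * B := by
    open scoped MatrixOrder in exact CStarAlgebra.nonneg_iff_eq_star_mul_self.mp hτ.nonneg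
  have key : star y ⬝ᵥ ((Bᴴ * B) *ᵥ y) = star (B *ᵥ y) ⬝ᵥ (B *ᵥ y) := by
    rw [Matrix.star_mulVec, ← Matrix.mulVec_mulVec, Matrix.dotProduct_mulVec]
  rw [key]
  have hyn : ∑ j, Complex.normSq (y j) = 1 := by
    have := congrArg Complex.re hy
    simpa [dotProduct, Complex.normSq, Complex.mul_re, mul_comm] using this
  have hdot : ∀ v : n → ℂ, (star v ⬝ᵥ v).re = ∑ j, Complex.normSq (v j) := by
    intro v
    simp [dotProduct, Complex.normSq, Complex.mul_re, mul_comm]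
  rw [hdot]
  have htr : ((Bᴴ * B).trace).re = ∑ j, ∑ i, Complex.normSq (B i j) := by
    simp [Matrix.trace, Matrix.diag, Matrix.mul_apply, Complex.normSq, Complex.mul_re, mul_comm]
  rw [htr]
  calc ∑ i, Complex.normSq ((B *ᵥ y) i)
      ≤ ∑ i, (∑ j, Complex.normSq (B i j)) * (∑ j, Complex.normSq (y j)) := by
        apply Finset.sum_le_sum
        intro i _
        exact row_bound (fun j => B i j) y
    _ = ∑ i, ∑ j, Complex.normSq (B i j) := by simp [hyn]
    _ = ∑ j, ∑ i, Complex.normSq (B i j) := by rw [Finset.sum_comm]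

lemma conj_dot {n : Type*} [Fintype n] (A σ : Matrix n n ℂ) (ψ : n → ℂ) :
    star (A *ᵥ ψ) ⬝ᵥ (σ *ᵥ (A *ᵥ ψ)) = star ψ ⬝ᵥ ((Aᴴ * σ * A) *ᵥ ψ) := by
  rw [Matrix.star_mulVec, Matrix.dotProduct_mulVec, Matrix.vecMul_vecMul,
    Matrix.dotProduct_mulVec, Matrix.vecMul_vecMul, Matrix.dotProduct_mulVec]

lemma trace_proj_mul {n : Type*} [Fintype n] (w : n → ℂ) (σ : Matrix n n ℂ) :
    ((proj w) * σ).trace = star w ⬝ᵥ (σ *ᵥ w) := by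
  simp only [proj, Matrix.trace, Matrix.diag, Matrix.mul_apply, Matrix.vecMulVec_apply,
    dotProduct, Matrix.mulVec, Pi.star_apply]
  rw [Finset.sum_comm]
  refine Finset.sum_congr rfl fun j _ => ?_
  rw [Finset.mul_sum]
  refine Finset.sum_congr rfl fun i _ => ?_
  ring

lemma proj_hermitian {n : Type*} [Fintype n] (w : n → ℂ) : (proj w).IsHermitian := by
  ext i j
  simp [proj, Matrix.conjTranspose_apply, Matrix.vecMulVec_apply, mul_comm]


theorem exists_witness_of_not_absFEF (d : ℕ) (hd : 2 ≤ d)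
    (ρ : Matrix (Fin d × Fin d) (Fin d × Fin d) ℂ)
    (hρ : IsDensityMatrix ρ) (h : ¬ AbsFEF d ρ) :
    ∃ S : Matrix (Fin d × Fin d) (Fin d × Fin d) ℂ, S.IsHermitian ∧
      (∀ σ, IsDensityMatrix σ → AbsFEF d σ → 0 ≤ ((S * σ).trace).re) ∧
      ((S * ρ).trace).re < 0 := by
  have hd0 : 0 < d := by omega
  have hpsi : star (psiPlus d) ⬝ᵥ psiPlus d = 1 := psi_norm d hd0
  -- extract a unitary U and a unitary V witnessing the failure
  unfold AbsFEF at h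
  push_neg at h
  obtain ⟨U, hU, hUgt⟩ := h
  obtain ⟨V, hV⟩ := exists_lt_of_lt_ciSup hUgt
  set W : Matrix (Fin d × Fin d) (Fin d × Fin d) ℂ :=
    (1 : Matrix (Fin d) (Fin d) ℂ) ⊗ₖ (V : Matrix (Fin d) (Fin d) ℂ) with hW
  have hWU : W ∈ Matrix.unitaryGroup (Fin d × Fin d) ℂ := kron_unitary _ V.2
  set w : (Fin d × Fin d) → ℂ := (Uᴴ * W) *ᵥ psiPlus d with hwdef
  -- the key rewriting of ⟨w|σ|w⟩
  have hw_eq : ∀ σ : Matrix (Fin d × Fin d) (Fin d × Fin d) ℂ,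
      star w ⬝ᵥ (σ *ᵥ w) =
      star (psiPlus d) ⬝ᵥ ((Wᴴ * (U * σ * Uᴴ) * W) *ᵥ psiPlus d) := by
    intro σ
    have he : (Uᴴ * W)ᴴ * σ * (Uᴴ * W) = Wᴴ * (U * σ * Uᴴ) * W := by
      rw [Matrix.conjTranspose_mul, Matrix.conjTranspose_conjTranspose]
      noncomm_ring
    rw [hwdef, conj_dot, he]
  -- trace formula
  have htrS : ∀ σ : Matrix (Fin d × Fin d) (Fin d × Fin d) ℂ, σ.trace = 1 →
      (((((d:ℝ)⁻¹ : ℝ) : ℂ) • 1 - proj w) * σ).trace.re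
        = (d:ℝ)⁻¹ - (star w ⬝ᵥ (σ *ᵥ w)).re := by
    intro σ hσ
    rw [Matrix.sub_mul, Matrix.trace_sub, Matrix.smul_mul, Matrix.one_mul, Matrix.trace_smul,
      hσ, trace_proj_mul]
    simp
  -- bound on the fef terms for PSD trace-one matrices
  have hterm_le : ∀ (τ : Matrix (Fin d × Fin d) (Fin d × Fin d) ℂ), τ.PosSemidef → τ.trace = 1 →
      ∀ V' : Matrix.unitaryGroup (Fin d) ℂ,
      (star (psiPlus d) ⬝ᵥ
        ((((1 : Matrix (Fin d) (Fin d) ℂ) ⊗ₖ (V' : Matrix (Fin d) (Fin d) ℂ))ᴴ * τ *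
          ((1 : Matrix (Fin d) (Fin d) ℂ) ⊗ₖ (V' : Matrix (Fin d) (Fin d) ℂ))) *ᵥ psiPlus d)).re
        ≤ 1 := by
    intro τ hτ hτtr V'
    set M : Matrix (Fin d × Fin d) (Fin d × Fin d) ℂ :=
      (1 : Matrix (Fin d) (Fin d) ℂ) ⊗ₖ (V' : Matrix (Fin d) (Fin d) ℂ) with hM
    have hMU : M ∈ Matrix.unitaryGroup (Fin d × Fin d) ℂ := kron_unitary _ V'.2
    rw [← conj_dot]
    have hy : star (M *ᵥ psiPlus d) ⬝ᵥ (M *ᵥ psiPlus d) = 1 := by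
      rw [unitary_mulVec_dot M hMU, hpsi]
    calc (star (M *ᵥ psiPlus d) ⬝ᵥ (τ *ᵥ (M *ᵥ psiPlus d))).re
        ≤ τ.trace.re := quad_le_trace hτ _ hy
      _ = 1 := by rw [hτtr]; simp
  refine ⟨(((d:ℝ)⁻¹ : ℝ) : ℂ) • 1 - proj w, ?_, ?_, ?_⟩
  · -- Hermitian
    refine Matrix.IsHermitian.sub ?_ (proj_hermitian w)
    show ((((d:ℝ)⁻¹ : ℝ) : ℂ) • (1 : Matrix (Fin d × Fin d) (Fin d × Fin d) ℂ))ᴴ = _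
    rw [Matrix.conjTranspose_smul, Matrix.conjTranspose_one]
    congr 1
    exact Complex.conj_ofReal _
  · -- nonneg on AbsFEF density matrices
    intro σ hσden hσabs
    rw [htrS σ hσden.2, sub_nonneg, hw_eq σ]
    have hτ : (U * σ * Uᴴ).PosSemidef := hσden.1.mul_mul_conjTranspose_same U
    have hτtr : (U * σ * Uᴴ).trace = 1 := by
      rw [Matrix.trace_mul_cycle,
        show Uᴴ * U = (1 : Matrix (Fin d × Fin d) (Fin d × Fin d) ℂ) from
          Matrix.mem_unitaryGroup_iff'.mp hU,
        Matrix.one_mul, hσden.2]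
    have hbdd : BddAbove (Set.range fun V' : Matrix.unitaryGroup (Fin d) ℂ =>
        (star (psiPlus d) ⬝ᵥ
          ((((1 : Matrix (Fin d) (Fin d) ℂ) ⊗ₖ (V' : Matrix (Fin d) (Fin d) ℂ))ᴴ * (U * σ * Uᴴ) *
            ((1 : Matrix (Fin d) (Fin d) ℂ) ⊗ₖ (V' : Matrix (Fin d) (Fin d) ℂ))) *ᵥ psiPlus d)).re) := by
      refine ⟨1, ?_⟩
      rintro x ⟨V', rfl⟩
      exact hterm_le _ hτ hτtr V'
    calc (star (psiPlus d) ⬝ᵥ ((Wᴴ * (U * σ * Uᴴ) * W) *ᵥ psiPlus d)).re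
        ≤ fef d (U * σ * Uᴴ) := le_ciSup hbdd V
      _ ≤ 1 / d := hσabs U hU
      _ = (d:ℝ)⁻¹ := one_div _
  · -- negative on ρ
    rw [htrS ρ hρ.2, sub_neg, hw_eq ρ]
    calc (d:ℝ)⁻¹ = 1 / d := (one_div _).symm
      _ < _ := hV
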